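/- arXiv:2007.10742 — 3 statements merged into one kernel-verified Lean document; each statement's English description precedes it below -/
import Mathlib

section
/- Let K = [a,b,c] and L = [b,c,d] be two non-degenerate triangles in ℝ² sharing the edge [b,c], lying on opposite sides of that edge, and let v ∈ ℝ². Define 𝟙ᵥ(x) = 1 if the segment [x, x+v] intersects the segment [b,c], and 0 otherwise. Then ∫_{ℝ²} 𝟙ᵥ(x) dx = |v| · |b - c| · |ν·v|/|v|, where ν is the unit vector orthogonal to b - c; i.e. the integral equals |b - c| · |ν · v|. -/
open RealInnerProductSpace MeasureTheory

/-- Lemma 2.7 (i): for two nondegenerate triangles `K = [a,b,c]`, `L = [b,c,d]` in `ℝ²`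
sharing the edge `[b,c]` and lying on opposite sides of it, and `v ∈ ℝ²`, the Lebesgue
measure of the set `{x : [x, x+v] ∩ [b,c] ≠ ∅}` equals `|b - c| · |ν · v|`, where `ν` is
the unit vector orthogonal to `b - c`. -/
theorem measure_segment_crossing_edge
    (a b c d v : EuclideanSpace ℝ (Fin 2))
    (hK : ¬ Collinear ℝ ({a, b, c} : Set _))
    (hL : ¬ Collinear ℝ ({b, c, d} : Set _))
    (ν : EuclideanSpace ℝ (Fin 2)) (hν : ‖ν‖ = 1) (hperp : ⟪ν, c - b⟫ = 0)
    (hopp : ⟪a - b, ν⟫ * ⟪d - b, ν⟫ < 0) :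
    volume {x : EuclideanSpace ℝ (Fin 2) |
        ∃ t ∈ Set.Icc (0 : ℝ) 1, x + t • v ∈ segment ℝ b c} =
      ENNReal.ofReal (dist b c * |⟪ν, v⟫|) := by
  have hbc : b ≠ c := by
    rintro rfl
    exact hK (by simpa [Set.insert_comm] using collinear_pair ℝ a b)
  -- Step 1: the set is a translate of a parallelepiped.
  have hset : {x : EuclideanSpace ℝ (Fin 2) |
        ∃ t ∈ Set.Icc (0 : ℝ) 1, x + t • v ∈ segment ℝ b c}
      = (b + ·) '' parallelepiped ![c - b, -v] := by
    ext x
    simp only [Set.mem_setOf_eq, Set.mem_image, mem_parallelepiped_iff,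
      segment_eq_image', Fin.sum_univ_two, Matrix.cons_val_zero,
      Matrix.cons_val_one, Matrix.head_cons]
    constructor
    · rintro ⟨t, ht, s, hs, heq⟩
      refine ⟨s • (c - b) + t • (-v), ⟨![s, t], ?_, by simp⟩, ?_⟩
      · constructor <;> intro i <;> fin_cases i <;>
          simp [ht.1, ht.2, hs.1, hs.2, Pi.le_def]
      · have h2 : x + t • v = b + s • (c - b) := heq.symm
        linear_combination (norm := module) -h2
    · rintro ⟨y, ⟨t, ht, rfl⟩, rfl⟩
      exact ⟨t 1, ⟨ht.1 1, ht.2 1⟩, t 0, ⟨ht.1 0, ht.2 0⟩, by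
        simp only [smul_neg]; module⟩
  -- Step 2: compute the volume of the parallelepiped.
  have hvol : volume ((b + ·) '' parallelepiped ![c - b, -v]) =
      ENNReal.ofReal |(c - b) 1 * v 0 - (c - b) 0 * v 1| := by
    rw [Set.image_add_left, measure_preimage_add]
    rw [← (EuclideanSpace.basisFun (Fin 2) ℝ).addHaar_eq_volume,
      Measure.addHaar_parallelepiped, Module.Basis.det_apply]
    congr 1
    rw [Matrix.det_fin_two]
    simp [Module.Basis.toMatrix_apply, EuclideanSpace.basisFun_repr]
    ring_nf
  rw [hset, hvol]
  congr 1
  -- Step 3: algebraic identification of the determinant.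
  set w : EuclideanSpace ℝ (Fin 2) := c - b with hw
  have hinner : ⟪ν, v⟫ = ν 0 * v 0 + ν 1 * v 1 := by
    simp [PiLp.inner_apply, Fin.sum_univ_two]; ring
  have h1 : ν 0 * w 0 + ν 1 * w 1 = 0 := by
    rw [← hperp]; simp [PiLp.inner_apply, Fin.sum_univ_two, mul_comm]
  have h2 : ν 0 ^ 2 + ν 1 ^ 2 = 1 := by
    have := real_inner_self_eq_norm_sq ν
    rw [hν] at this
    simp only [PiLp.inner_apply, RCLike.inner_apply, starRingEnd_apply, star_trivial,
      Fin.sum_univ_two] at this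
    nlinarith [this]
  have hdist : dist b c = ‖w‖ := by rw [hw, dist_eq_norm, norm_sub_rev]
  have hnw : ‖w‖ ^ 2 = w 0 ^ 2 + w 1 ^ 2 := by
    have := real_inner_self_eq_norm_sq w
    simp only [PiLp.inner_apply, RCLike.inner_apply, starRingEnd_apply, star_trivial,
      Fin.sum_univ_two] at this
    nlinarith [this]
  have hw0 : w ≠ 0 := sub_ne_zero.mpr (Ne.symm hbc)
  have hA : w 0 ^ 2 + w 1 ^ 2 ≠ 0 := by
    rw [← hnw]
    exact pow_ne_zero 2 (norm_ne_zero_iff.mpr hw0)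
  set A := w 0 ^ 2 + w 1 ^ 2 with hAdef
  set μ := ν 0 * w 1 - ν 1 * w 0 with hμdef
  set S := ν 0 * v 0 + ν 1 * v 1 with hSdef
  set D := w 1 * v 0 - w 0 * v 1 with hDdef
  have hμ2 : μ ^ 2 = A := by linear_combination A * h2 - (ν 0 * w 0 + ν 1 * w 1) * h1
  have hAS : A * S = μ * D := by linear_combination (v 0 * w 0 + v 1 * w 1) * h1
  have hDD : A * D ^ 2 = A * (A * S ^ 2) := by
    linear_combination (-(D ^ 2)) * hμ2 - (A * S + μ * D) * hAS
  have hkey : D ^ 2 = A * S ^ 2 := mul_left_cancel₀ hA hDD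
  rw [hdist, hinner]
  rw [← Real.sqrt_sq (abs_nonneg D), ← Real.sqrt_sq (by positivity : (0:ℝ) ≤ ‖w‖ * |S|)]
  congr 1
  rw [sq_abs, mul_pow, sq_abs, hnw, hkey]
end

section
/- Let a,b,c,d ∈ ℝ², w ∈ ℝ², and v ∈ ℝ². Set v̄ = (v, v·w) ∈ ℝ³ and similarly ā = (a, a·w), b̄, c̄, d̄ ∈ ℝ³. Let l̄ be the length of the segment [b̄, c̄] and θ̄ = |ν̄ · v̄|/|v̄| where ν̄ is the unit vector in the plane {(x, x·w) : x ∈ ℝ²} orthogonal to c̄ - b̄. If 𝟙ᵥ(x) = 1 exactly when [x,x+v] meets [b,c] in ℝ², then ∫_{ℝ²} 𝟙ᵥ(x) dx = (|v̄| / √(1+|w|²)) · θ̄ · l̄. -/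
open RealInnerProductSpace MeasureTheory

/-- The lift `x ↦ (x, x·w)` of the plane into `ℝ³`. -/
noncomputable def liftW (w x : EuclideanSpace ℝ (Fin 2)) : EuclideanSpace ℝ (Fin 3) :=
  (WithLp.equiv 2 (Fin 3 → ℝ)).symm ![x 0, x 1, ⟪x, w⟫]

lemma liftW_inner (w x y : EuclideanSpace ℝ (Fin 2)) :
    ⟪liftW w x, liftW w y⟫ = x 0 * y 0 + x 1 * y 1 +
      (x 0 * w 0 + x 1 * w 1) * (y 0 * w 0 + y 1 * w 1) := by
  simp [liftW, PiLp.inner_apply, RCLike.inner_apply, Fin.sum_univ_three, Fin.sum_univ_two]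
  ring

lemma liftW_sub (w x y : EuclideanSpace ℝ (Fin 2)) :
    liftW w (x - y) = liftW w x - liftW w y := by
  ext i
  fin_cases i <;> simp [liftW, inner_sub_left]

lemma norm_sq_two (w : EuclideanSpace ℝ (Fin 2)) : ‖w‖ ^ 2 = w 0 ^ 2 + w 1 ^ 2 := by
  rw [← real_inner_self_eq_norm_sq]
  simp only [PiLp.inner_apply, RCLike.inner_apply, conj_trivial, Fin.sum_univ_two]
  ring

lemma liftW_ne_zero {w v : EuclideanSpace ℝ (Fin 2)} (hv : v ≠ 0) : liftW w v ≠ 0 := by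
  intro h
  apply hv
  have h0 : liftW w v 0 = 0 := by rw [h]; rfl
  have h1 : liftW w v 1 = 0 := by rw [h]; rfl
  simp [liftW] at h0 h1
  ext i
  fin_cases i <;> simpa

/-- The key algebraic identity. -/
lemma key_poly (n0 n1 e0 e1 v0 v1 w0 w1 : ℝ)
    (F1 : n0 * n0 + n1 * n1 + (n0 * w0 + n1 * w1) * (n0 * w0 + n1 * w1) = 1)
    (F2 : n0 * e0 + n1 * e1 + (n0 * w0 + n1 * w1) * (e0 * w0 + e1 * w1) = 0)
    (he : e0 * e0 + e1 * e1 + (e0 * w0 + e1 * w1) * (e0 * w0 + e1 * w1) ≠ 0) :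
    (n0 * v0 + n1 * v1 + (n0 * w0 + n1 * w1) * (v0 * w0 + v1 * w1)) ^ 2 *
      (e0 * e0 + e1 * e1 + (e0 * w0 + e1 * w1) * (e0 * w0 + e1 * w1)) =
    (1 + (w0 ^ 2 + w1 ^ 2)) * (v0 * e1 - v1 * e0) ^ 2 := by
  set Qe := e0 * e0 + e1 * e1 + (e0 * w0 + e1 * w1) * (e0 * w0 + e1 * w1) with hQe
  set Bnv := n0 * v0 + n1 * v1 + (n0 * w0 + n1 * w1) * (v0 * w0 + v1 * w1) with hBnv
  have G1 : Qe = (1 + (w0 ^ 2 + w1 ^ 2)) * (n0 * e1 - n1 * e0) ^ 2 := by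
    rw [hQe]
    linear_combination (-(e0 * e0 + e1 * e1 + (e0 * w0 + e1 * w1) * (e0 * w0 + e1 * w1))) * F1 +
      (n0 * e0 + n1 * e1 + (n0 * w0 + n1 * w1) * (e0 * w0 + e1 * w1)) * F2
  have G2 : Bnv * Qe =
      (1 + (w0 ^ 2 + w1 ^ 2)) * (n0 * e1 - n1 * e0) * (v0 * e1 - v1 * e0) := by
    rw [hBnv, hQe]
    linear_combination (e0 * v0 + e1 * v1 + (e0 * w0 + e1 * w1) * (v0 * w0 + v1 * w1)) * F2
  have H : (Bnv ^ 2 * Qe - (1 + (w0 ^ 2 + w1 ^ 2)) * (v0 * e1 - v1 * e0) ^ 2) * Qe = 0 := by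
    linear_combination (Bnv * Qe + (1 + (w0 ^ 2 + w1 ^ 2)) * (n0 * e1 - n1 * e0) *
      (v0 * e1 - v1 * e0)) * G2 - (1 + (w0 ^ 2 + w1 ^ 2)) * (v0 * e1 - v1 * e0) ^ 2 * G1
  rcases mul_eq_zero.mp H with h | h
  · linarith [sub_eq_zero.mp h]
  · exact absurd h he

/-- Lemma 2.7 (ii): with `v̄ = (v, v·w)`, `b̄, c̄` the lifts of `b, c`,
`l̄ = |b̄ - c̄|`, and `θ̄ = |ν̄ · v̄| / |v̄|` for `ν̄` the unit vector in the plane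
`{(x, x·w)}` orthogonal to `c̄ - b̄`, the Lebesgue measure of
`{x ∈ ℝ² : [x, x+v] ∩ [b,c] ≠ ∅}` equals `(|v̄| / √(1+|w|²)) · θ̄ · l̄`. -/
theorem measure_segment_crossing_edge_lifted
    (a b c d v w : EuclideanSpace ℝ (Fin 2)) (hv : v ≠ 0)
    (hK : ¬ Collinear ℝ ({a, b, c} : Set _))
    (hL : ¬ Collinear ℝ ({b, c, d} : Set _))
    (νbar : EuclideanSpace ℝ (Fin 3))
    (hplane : ∃ ν₀ : EuclideanSpace ℝ (Fin 2), νbar = liftW w ν₀)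
    (hν : ‖νbar‖ = 1) (hperp : ⟪νbar, liftW w c - liftW w b⟫ = 0) :
    volume {x : EuclideanSpace ℝ (Fin 2) |
        ∃ t ∈ Set.Icc (0 : ℝ) 1, x + t • v ∈ segment ℝ b c} =
      ENNReal.ofReal
        (‖liftW w v‖ / Real.sqrt (1 + ‖w‖ ^ 2) *
          (|⟪νbar, liftW w v⟫| / ‖liftW w v‖) * dist (liftW w b) (liftW w c)) := by
  obtain ⟨ν₀, rfl⟩ := hplane
  -- b ≠ c
  have hbc : b ≠ c := by
    rintro rfl
    apply hK
    have : ({a, b, b} : Set (EuclideanSpace ℝ (Fin 2))) = {a, b} := by simp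
    rw [this]
    exact collinear_pair ℝ a b
  set e : EuclideanSpace ℝ (Fin 2) := c - b with he_def
  have he : e ≠ 0 := sub_ne_zero.mpr (Ne.symm hbc)
  -- the set is a translated parallelepiped
  have hset : {x : EuclideanSpace ℝ (Fin 2) |
      ∃ t ∈ Set.Icc (0 : ℝ) 1, x + t • v ∈ segment ℝ b c} =
      (fun x => -b + x) ⁻¹' parallelepiped ![e, -v] := by
    ext x
    simp only [Set.mem_setOf_eq, Set.mem_preimage, parallelepiped, Set.mem_image,
      segment_eq_image', Set.mem_Icc, Fin.sum_univ_two, Matrix.cons_val_zero,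
      Matrix.cons_val_one, Matrix.head_cons]
    constructor
    · rintro ⟨t, ⟨ht0, ht1⟩, s, ⟨hs0, hs1⟩, hx⟩
      rw [← he_def] at hx
      refine ⟨![s, t], ⟨?_, ?_⟩, ?_⟩
      · intro i; fin_cases i <;> simpa
      · intro i; fin_cases i <;> simpa
      · simp only [Matrix.cons_val_zero, Matrix.cons_val_one, Matrix.head_cons]
        have hx2 : x = b + s • e - t • v := eq_sub_of_add_eq hx.symm
        rw [hx2, smul_neg]
        abel
    · rintro ⟨t, ⟨ht0, ht1⟩, hx⟩
      refine ⟨t 1, ⟨ht0 1, ht1 1⟩, t 0, ⟨ht0 0, ht1 0⟩, ?_⟩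
      rw [smul_neg] at hx
      rw [← he_def]
      have hx2 : x = b + (t 0 • e - t 1 • v) := by
        rw [sub_eq_add_neg, hx]; abel
      rw [hx2]
      abel
  rw [hset, measure_preimage_add]
  -- volume of the parallelepiped
  have hvol : volume (parallelepiped ![e, -v]) =
      ENNReal.ofReal |e 0 * (-v) 1 - (-v) 0 * e 1| := by
    rw [← (EuclideanSpace.basisFun (Fin 2) ℝ).addHaar_eq_volume, Measure.addHaar_parallelepiped,
      Module.Basis.det_apply]
    congr 2
    rw [Matrix.det_fin_two]
    simp [Module.Basis.toMatrix_apply]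
  rw [hvol]
  congr 1
  -- now a real identity
  have hLv : ‖liftW w v‖ ≠ 0 := norm_ne_zero_iff.mpr (liftW_ne_zero hv)
  have hΔpos : (0:ℝ) < 1 + ‖w‖ ^ 2 := by positivity
  have hsΔ : Real.sqrt (1 + ‖w‖ ^ 2) ≠ 0 := by positivity
  -- coordinates facts
  have hF1 : ν₀ 0 * ν₀ 0 + ν₀ 1 * ν₀ 1 +
      (ν₀ 0 * w 0 + ν₀ 1 * w 1) * (ν₀ 0 * w 0 + ν₀ 1 * w 1) = 1 := by
    have h1 : ⟪liftW w ν₀, liftW w ν₀⟫ = 1 := by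
      rw [real_inner_self_eq_norm_sq, hν]; norm_num
    rw [liftW_inner] at h1
    linarith
  have hF2 : ν₀ 0 * e 0 + ν₀ 1 * e 1 +
      (ν₀ 0 * w 0 + ν₀ 1 * w 1) * (e 0 * w 0 + e 1 * w 1) = 0 := by
    have h2 : ⟪liftW w ν₀, liftW w e⟫ = 0 := by
      rw [he_def, liftW_sub]; exact hperp
    rw [liftW_inner] at h2
    linarith
  have hLe : liftW w e ≠ 0 := liftW_ne_zero he
  have hQe : ‖liftW w e‖ ^ 2 = e 0 * e 0 + e 1 * e 1 +
      (e 0 * w 0 + e 1 * w 1) * (e 0 * w 0 + e 1 * w 1) := by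
    rw [← real_inner_self_eq_norm_sq, liftW_inner]
  have hQene : e 0 * e 0 + e 1 * e 1 +
      (e 0 * w 0 + e 1 * w 1) * (e 0 * w 0 + e 1 * w 1) ≠ 0 := by
    rw [← hQe]
    exact pow_ne_zero 2 (norm_ne_zero_iff.mpr hLe)
  have key := key_poly (ν₀ 0) (ν₀ 1) (e 0) (e 1) (v 0) (v 1) (w 0) (w 1) hF1 hF2 hQene
  -- |⟪ν̄, Lv⟫| * ‖Le‖ = √Δ * |v0 e1 - v1 e0|
  have hA2 : ⟪liftW w ν₀, liftW w v⟫ ^ 2 * ‖liftW w e‖ ^ 2 =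
      (1 + ‖w‖ ^ 2) * (v 0 * e 1 - v 1 * e 0) ^ 2 := by
    rw [liftW_inner, hQe, norm_sq_two]
    exact key
  have hkey : |⟪liftW w ν₀, liftW w v⟫| * ‖liftW w e‖ =
      Real.sqrt (1 + ‖w‖ ^ 2) * |v 0 * e 1 - v 1 * e 0| := by
    have h0 : (0:ℝ) ≤ |⟪liftW w ν₀, liftW w v⟫| * ‖liftW w e‖ := by positivity
    rw [← Real.sqrt_sq h0, mul_pow, sq_abs, hA2, Real.sqrt_mul hΔpos.le,
      Real.sqrt_sq_eq_abs]
  -- distance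
  have hdist : dist (liftW w b) (liftW w c) = ‖liftW w e‖ := by
    rw [dist_eq_norm, norm_sub_rev, ← liftW_sub, ← he_def]
  rw [hdist]
  have hstep : ‖liftW w v‖ / Real.sqrt (1 + ‖w‖ ^ 2) *
      (|⟪liftW w ν₀, liftW w v⟫| / ‖liftW w v‖) * ‖liftW w e‖ =
      |⟪liftW w ν₀, liftW w v⟫| * ‖liftW w e‖ / Real.sqrt (1 + ‖w‖ ^ 2) := by
    field_simp
  rw [hstep, hkey, mul_div_cancel_left₀ _ hsΔ]
  have hn1 : (-v) 1 = -(v 1) := rfl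
  have hn0 : (-v) 0 = -(v 0) := rfl
  rw [hn0, hn1]
  rw [show e 0 * -(v 1) - -(v 0) * e 1 = v 0 * e 1 - v 1 * e 0 from by ring]
end

section
/- Let X ⊂ S² ⊂ ℝ³ be a finite set such that no four points of X are coplanar and every open hemisphere {x ∈ S² : x·n > 0} (n ∈ S²) contains a point of X. Then every face of the convex polytope conv(X) is a triangle K = [x,y,z] with x,y,z ∈ X, and for every such face with outward unit normal n(K), one has q(K) = |q(K)| n(K), where q(K) is the circumcenter of K; moreover the open circumball of K contains no point of X \ {x,y,z}. -/
open RealInnerProductSpace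
set_option maxHeartbeats 1000000

/-- Delaunay triangulation of the sphere via the convex hull: let `X ⊂ S²` be finite with
no four points coplanar, such that every open hemisphere contains a point of `X`. Then
every face of `conv(X)` (given by points `x,y,z ∈ X` on a supporting plane with outward
unit normal `n`) is a triangle (no fourth point of `X` lies on the supporting plane), its
circumcenter `q` satisfies `q = |q| n`, and no point of `X \ {x,y,z}` lies in the open
circumball of the face. -/
theorem sphere_convex_hull_delaunay
    (X : Set (EuclideanSpace ℝ (Fin 3))) (hXfin : X.Finite)
    (hXsph : ∀ p ∈ X, ‖p‖ = 1)
    (hnocoplanar : ∀ p₁ ∈ X, ∀ p₂ ∈ X, ∀ p₃ ∈ X, ∀ p₄ ∈ X,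
      p₁ ≠ p₂ → p₁ ≠ p₃ → p₁ ≠ p₄ → p₂ ≠ p₃ → p₂ ≠ p₄ → p₃ ≠ p₄ →
      ¬ Coplanar ℝ ({p₁, p₂, p₃, p₄} : Set _))
    (hhemi : ∀ n : EuclideanSpace ℝ (Fin 3), ‖n‖ = 1 → ∃ p ∈ X, ⟪p, n⟫ > 0)
    -- a face of `conv(X)`: three points of `X` on a supporting plane with outward
    -- unit normal `n`
    (x y z : EuclideanSpace ℝ (Fin 3)) (hx : x ∈ X) (hy : y ∈ X) (hz : z ∈ X)
    (hxy : x ≠ y) (hxz : x ≠ z) (hyz : y ≠ z)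
    (n : EuclideanSpace ℝ (Fin 3)) (hn : ‖n‖ = 1)
    (hny : ⟪n, y - x⟫ = 0) (hnz : ⟪n, z - x⟫ = 0)
    (hsupp : ∀ p ∈ X, ⟪p - x, n⟫ ≤ 0)
    -- `q` is the circumcenter of the face `[x,y,z]`
    (q : EuclideanSpace ℝ (Fin 3))
    (hq₁ : dist q x = dist q y) (hq₂ : dist q x = dist q z) (hq₃ : ⟪q - x, n⟫ = 0) :
    (∀ p ∈ X, ⟪p - x, n⟫ = 0 → p = x ∨ p = y ∨ p = z) ∧
      q = ‖q‖ • n ∧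
      (∀ p ∈ X, p ≠ x → p ≠ y → p ≠ z → dist p q > dist x q) := by
    classical
  have hn0 : n ≠ 0 := fun h => by simp [h] at hn
  obtain ⟨p₀, hp₀X, hp₀⟩ := hhemi n hn
  have hsupp' : ∀ p ∈ X, ⟪p, n⟫ ≤ ⟪x, n⟫ := by
    intro p hp
    have := hsupp p hp
    rw [inner_sub_left] at this; linarith
  have htpos : 0 < ⟪x, n⟫ := lt_of_lt_of_le hp₀ (hsupp' p₀ hp₀X)
  -- Claim 1
  have claim1 : ∀ p ∈ X, ⟪p - x, n⟫ = 0 → p = x ∨ p = y ∨ p = z := by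
    intro p hp hpn
    by_contra hcon
    push_neg at hcon
    obtain ⟨hpx, hpy, hpz⟩ := hcon
    refine hnocoplanar x hx y hy z hz p hp hxy hxz (Ne.symm hpx) hyz (Ne.symm hpy)
      (Ne.symm hpz) ?_
    have hmem : ∀ a ∈ ({x, y, z, p} : Set (EuclideanSpace ℝ (Fin 3))), ⟪n, a - x⟫ = 0 := by
      intro a ha
      simp only [Set.mem_insert_iff, Set.mem_singleton_iff] at ha
      rcases ha with rfl | rfl | rfl | rfl
      · simp
      · exact hny
      · exact hnz
      · rw [real_inner_comm]; exact hpn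
    have hW : vectorSpan ℝ ({x, y, z, p} : Set (EuclideanSpace ℝ (Fin 3))) ≤ (ℝ ∙ n)ᗮ := by
      rw [vectorSpan_def, Submodule.span_le]
      rintro v ⟨a, ha, b, hb, rfl⟩
      rw [SetLike.mem_coe, Submodule.mem_orthogonal_singleton_iff_inner_right]
      show (⟪n, a - b⟫ : ℝ) = 0
      have h1 := hmem a ha
      have h2 := hmem b hb
      have : a - b = (a - x) - (b - x) := by abel
      rw [this, inner_sub_right, h1, h2, sub_zero]
    have hfin : Module.finrank ℝ ((ℝ ∙ n)ᗮ : Submodule ℝ (EuclideanSpace ℝ (Fin 3))) = 2 := by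
      have h1 : Module.finrank ℝ (ℝ ∙ n : Submodule ℝ (EuclideanSpace ℝ (Fin 3))) = 1 :=
        finrank_span_singleton hn0
      have h2 := Submodule.finrank_add_finrank_orthogonal
        (K := (ℝ ∙ n : Submodule ℝ (EuclideanSpace ℝ (Fin 3))))
      rw [h1, finrank_euclideanSpace_fin] at h2
      omega
    unfold Coplanar
    calc Module.rank ℝ (vectorSpan ℝ ({x, y, z, p} : Set (EuclideanSpace ℝ (Fin 3))))
        ≤ Module.rank ℝ ((ℝ ∙ n)ᗮ : Submodule ℝ (EuclideanSpace ℝ (Fin 3))) :=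
          Submodule.rank_mono hW
      _ = 2 := by rw [← Module.finrank_eq_rank, hfin]; norm_num
  -- circumcenter orthogonality
  have key : ∀ a b : EuclideanSpace ℝ (Fin 3), ‖a‖ = 1 → ‖b‖ = 1 → dist q a = dist q b →
      ⟪b - a, q⟫ = 0 := by
    intro a b ha hb h
    have h2 : ‖q - a‖ ^ 2 = ‖q - b‖ ^ 2 := by rw [← dist_eq_norm, ← dist_eq_norm, h]
    rw [norm_sub_sq_real, norm_sub_sq_real, ha, hb] at h2
    rw [inner_sub_left]
    have e1 := real_inner_comm q a
    have e2 := real_inner_comm q b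
    linarith
  have hqy : ⟪y - x, q⟫ = 0 := key x y (hXsph x hx) (hXsph y hy) hq₁
  have hqz : ⟪z - x, q⟫ = 0 := key x z (hXsph x hx) (hXsph z hz) hq₂
  -- membership in the orthogonal complement of the span of the edge vectors
  have hmemU : ∀ v : EuclideanSpace ℝ (Fin 3), ⟪y - x, v⟫ = 0 → ⟪z - x, v⟫ = 0 →
      v ∈ (Submodule.span ℝ ({y - x, z - x} : Set (EuclideanSpace ℝ (Fin 3))))ᗮ := by
    intro v h1 h2
    rw [Submodule.mem_orthogonal]
    intro u hu
    induction hu using Submodule.span_induction with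
    | mem u hu =>
      simp only [Set.mem_insert_iff, Set.mem_singleton_iff] at hu
      rcases hu with rfl | rfl
      · exact h1
      · exact h2
    | zero => simp
    | add u w _ _ hu hw => rw [inner_add_left, hu, hw, add_zero]
    | smul c u _ hu => rw [inner_smul_left, hu, mul_zero]
  have hnU := hmemU n (by rw [real_inner_comm]; exact hny) (by rw [real_inner_comm]; exact hnz)
  have hqU := hmemU q hqy hqz
  -- q is a multiple of n
  have hqc : q = ⟪x, n⟫ • n := by
    by_cases hli : LinearIndependent ℝ ![y - x, z - x]
    · have hrange : Set.range ![y - x, z - x] = ({y - x, z - x} : Set (EuclideanSpace ℝ (Fin 3))) := by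
        simp [Matrix.range_cons, Matrix.range_empty]
        exact Set.pair_comm _ _
      have hcard : Module.finrank ℝ
          (Submodule.span ℝ ({y - x, z - x} : Set (EuclideanSpace ℝ (Fin 3)))) = 2 := by
        rw [← hrange, finrank_span_eq_card hli]
        simp
      have hUfin : Module.finrank ℝ
          ((Submodule.span ℝ ({y - x, z - x} : Set (EuclideanSpace ℝ (Fin 3))))ᗮ) = 1 := by
        have h2 := Submodule.finrank_add_finrank_orthogonal
          (K := Submodule.span ℝ ({y - x, z - x} : Set (EuclideanSpace ℝ (Fin 3))))
        rw [hcard, finrank_euclideanSpace_fin] at h2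
        omega
      have hle : (ℝ ∙ n) ≤ (Submodule.span ℝ ({y - x, z - x} : Set (EuclideanSpace ℝ (Fin 3))))ᗮ := by
        rw [Submodule.span_le, Set.singleton_subset_iff]
        exact hnU
      have heq : (ℝ ∙ n) = (Submodule.span ℝ ({y - x, z - x} : Set (EuclideanSpace ℝ (Fin 3))))ᗮ := by
        apply Submodule.eq_of_le_of_finrank_eq hle
        rw [hUfin, finrank_span_singleton hn0]
      rw [← heq] at hqU
      obtain ⟨c, hc⟩ := Submodule.mem_span_singleton.mp hqU
      have hcval : c = ⟪x, n⟫ := by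
        have := hq₃
        rw [← hc, inner_sub_left, real_inner_smul_left, real_inner_self_eq_norm_sq, hn] at this
        nlinarith [this]
      rw [← hc, hcval]
    · exfalso
      rw [linearIndependent_fin2] at hli
      push_neg at hli
      simp only [Matrix.cons_val_one, Matrix.head_cons, Matrix.cons_val_zero] at hli
      have hzx : z - x ≠ 0 := sub_ne_zero.mpr (Ne.symm hxz)
      obtain ⟨a, ha⟩ := hli hzx
      -- x, y, z are collinear; find a fourth point of X via the hemisphere condition
      set V : Submodule ℝ (EuclideanSpace ℝ (Fin 3)) :=
        Submodule.span ℝ (({x, z - x} : Finset (EuclideanSpace ℝ (Fin 3))) :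
          Set (EuclideanSpace ℝ (Fin 3))) with hV
      have hVle : Module.finrank ℝ V ≤ 2 := by
        refine le_trans (finrank_span_finset_le_card _) ?_
        refine le_trans (Finset.card_insert_le _ _) ?_
        simp
      have hVbot : Vᗮ ≠ ⊥ := by
        intro hbot
        rw [Submodule.orthogonal_eq_bot_iff] at hbot
        rw [hbot, finrank_top, finrank_euclideanSpace_fin] at hVle
        omega
      obtain ⟨v, hvV, hv0⟩ := Submodule.exists_mem_ne_zero_of_ne_bot hVbot
      set m : EuclideanSpace ℝ (Fin 3) := ‖v‖⁻¹ • v with hm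
      have hmnorm : ‖m‖ = 1 := by
        rw [hm, norm_smul, norm_inv, norm_norm, inv_mul_cancel₀ (norm_ne_zero_iff.mpr hv0)]
      have hmV : m ∈ Vᗮ := Submodule.smul_mem _ _ hvV
      obtain ⟨p, hpX, hpm⟩ := hhemi m hmnorm
      have horth := (Submodule.mem_orthogonal V m).mp hmV
      have hxm : ⟪x, m⟫ = 0 := horth x (Submodule.subset_span (by simp))
      have hzxm : ⟪z - x, m⟫ = 0 := horth (z - x) (Submodule.subset_span (by simp))
      have hzm : ⟪z, m⟫ = 0 := by
        have : z = (z - x) + x := by abel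
        rw [this, inner_add_left, hxm, hzxm, add_zero]
      have hym : ⟪y, m⟫ = 0 := by
        have : y = a • (z - x) + x := by rw [ha]; abel
        rw [this, inner_add_left, inner_smul_left, hzxm, hxm]
        simp
      have hpx : x ≠ p := fun h => by rw [← h] at hpm; linarith
      have hpy : y ≠ p := fun h => by rw [← h] at hpm; linarith
      have hpz : z ≠ p := fun h => by rw [← h] at hpm; linarith
      refine hnocoplanar x hx y hy z hz p hpX hxy hxz hpx hyz hpy hpz ?_
      have hcol : Collinear ℝ ({x, y, z} : Set (EuclideanSpace ℝ (Fin 3))) := by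
        rw [collinear_iff_of_mem (Set.mem_insert x _)]
        refine ⟨z - x, ?_⟩
        intro w hw
        simp only [Set.mem_insert_iff, Set.mem_singleton_iff] at hw
        rcases hw with rfl | rfl | rfl
        · exact ⟨0, by simp⟩
        · exact ⟨a, by rw [ha]; simp⟩
        · exact ⟨1, by simp⟩
      have hseteq : ({x, y, z, p} : Set (EuclideanSpace ℝ (Fin 3))) =
          insert p ({x, y, z} : Set (EuclideanSpace ℝ (Fin 3))) := by
        ext w; simp; tauto
      rw [hseteq]
      exact hcol.coplanar_insert p
  have hqnorm : ‖q‖ = ⟪x, n⟫ := by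
    rw [hqc, norm_smul, hn, mul_one, Real.norm_eq_abs, abs_of_pos htpos]
  refine ⟨claim1, by rw [hqnorm, ← hqc], ?_⟩
  intro p hp h1 h2 h3
  have hne : ⟪p - x, n⟫ ≠ 0 := by
    intro h
    rcases claim1 p hp h with rfl | rfl | rfl
    exacts [h1 rfl, h2 rfl, h3 rfl]
  have hlt : ⟪p, n⟫ < ⟪x, n⟫ := by
    have h := lt_of_le_of_ne (hsupp p hp) hne
    rw [inner_sub_left] at h; linarith
  have hsq : dist x q ^ 2 < dist p q ^ 2 := by
    rw [dist_eq_norm, dist_eq_norm, norm_sub_sq_real, norm_sub_sq_real,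
      hXsph p hp, hXsph x hx, hqc, real_inner_smul_right, real_inner_smul_right]
    nlinarith [htpos, hlt]
  exact lt_of_pow_lt_pow_left₀ 2 dist_nonneg hsq
end
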